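/- If A is an ancestral set of vertices in an mDAG G, then the latent projection of G onto A equals the induced subgraph: p(G, A) = G_A. -/

import Mathlib

/-- An mDAG: an acyclic directed graph together with an abstract simplicial complex of
bidirected faces (all faces nonempty, all singletons present, closed under nonempty subsets). -/
structure MDAG (W : Type) where
  Edge : W → W → Prop
  Faces : Set (Set W)
  acyclic : ∀ w, ¬ Relation.TransGen Edge w w
  singleton_mem : ∀ w : W, {w} ∈ Faces
  nonempty_of_mem : ∀ B ∈ Faces, B.Nonempty
  down_closed : ∀ A B : Set W, A ⊆ B → A.Nonempty → B ∈ Faces → A ∈ Faces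

/-- `projEdge Edge U a b`: there is a directed path from `a` to `b` (of length ≥ 1) with all
non-endpoint vertices in `U`.  This is the directed-edge relation of the latent projection
that projects out `U`. -/
def projEdge {W : Type} (Edge : W → W → Prop) (U : Set W) (a b : W) : Prop :=
  ∃ c, Relation.ReflTransGen (fun x y => Edge x y ∧ y ∈ U) a c ∧ Edge c b

/-- `hcc Edge Faces U S`: the vertices of `S` share a hidden common cause with respect to `U`:
there is a bidirected face `B ⊆ U ∪ S` such that every `w ∈ S` is reached from some `b ∈ B`
by a directed path all of whose vertices lie in `U ∪ {w}`. -/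
def hcc {W : Type} (Edge : W → W → Prop) (Faces : Set (Set W)) (U : Set W) (S : Set W) : Prop :=
  ∃ B ∈ Faces, B ⊆ U ∪ S ∧
    ∀ w ∈ S, ∃ b ∈ B, Relation.ReflTransGen (fun x y => Edge x y ∧ x ∈ U) b w

/-- If `A` is an ancestral set of vertices in an mDAG `G`, then the latent projection of `G`
onto `A` equals the induced subgraph `G_A`: projected directed edges between vertices of `A`
are exactly the edges of `G`, and the subsets of `A` sharing a hidden common cause w.r.t.
`Aᶜ` are exactly the bidirected faces of `G` contained in `A`. -/
theorem stmt10 {V : Type} [Fintype V] (G : MDAG V) (A : Set V)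
    (hanc : ∀ a ∈ A, ∀ v, Relation.ReflTransGen G.Edge v a → v ∈ A) :
    (∀ a ∈ A, ∀ b ∈ A, (projEdge G.Edge Aᶜ a b ↔ G.Edge a b)) ∧
    (∀ S : Set V, S ⊆ A → S.Nonempty →
      (hcc G.Edge G.Faces Aᶜ S ↔ S ∈ G.Faces)) := by
  constructor
  · intro a ha b hb
    constructor
    · rintro ⟨c, hac, hcb⟩
      have hcA : c ∈ A := hanc b hb c (Relation.ReflTransGen.single hcb)
      rcases hac.cases_tail with rfl | ⟨d, _, _, hcU⟩
      · exact hcb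
      · exact absurd hcA hcU
    · intro h
      exact ⟨a, Relation.ReflTransGen.refl, h⟩
  · intro S hS hSne
    constructor
    · rintro ⟨B, hBF, hBsub, hall⟩
      have hSB : S ⊆ B := by
        intro w hw
        obtain ⟨b, hbB, hpath⟩ := hall w hw
        have hbA : b ∈ A := by
          refine hanc w (hS hw) b ?_
          exact Relation.ReflTransGen.mono (fun x y h => h.1) _ _ hpath
        rcases hpath.cases_head with rfl | ⟨c, ⟨_, hbU⟩, _⟩
        · exact hbB
        · exact absurd hbA hbU
      exact G.down_closed S B hSB hSne hBF
    · intro hSF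
      refine ⟨S, hSF, fun x hx => Or.inr hx, fun w hw => ⟨w, hw, Relation.ReflTransGen.refl⟩⟩
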